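/- There exists a universal constant C > 0 such that the following holds. Let σ > 0, α ∈ (0, 1/2], δ ∈ (0,1), μ ∈ ℝ, let t be a positive integer, and let X_1, …, X_t be i.i.d. real random variables, each σ-sub-Gaussian with mean μ. Let E denote the interval [μ − σ√(2 log(2/α)), μ + σ√(2 log(2/α))]. Then with probability at least 1 − δ, | Σ_{s=1}^t (X_s − μ) · 1{X_s ∈ E} | ≤ C t ( σ α √(log(1/α)) + σ √((2/t) log(2/δ)) ). -/

import Mathlib

open MeasureTheory ProbabilityTheory

/-- A real random variable `X` is `σ`-sub-Gaussian with mean `μ` under `P`: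
it is measurable, integrable with mean `μ`, and its centered moment generating
function satisfies `E[exp (l (X - μ))] ≤ exp (l² σ² / 2)` for all `l ∈ ℝ`. -/
def IsSubGaussianRV {Ω : Type*} [MeasurableSpace Ω] (P : Measure Ω)
    (X : Ω → ℝ) (μ σ : ℝ) : Prop :=
  Measurable X ∧ Integrable X P ∧ (∫ ω, X ω ∂P) = μ ∧
    ∀ l : ℝ, Integrable (fun ω => Real.exp (l * (X ω - μ))) P ∧
      (∫ ω, Real.exp (l * (X ω - μ)) ∂P) ≤ Real.exp (l ^ 2 * σ ^ 2 / 2)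

section AuxiliaryLemmas
open Real

set_option linter.unusedSectionVars false
set_option linter.unusedVariables false


lemma exp_abs_le_add (w : ℝ) : Real.exp |w| ≤ Real.exp w + Real.exp (-w) := by
  rcases abs_choice w with h | h <;> rw [h]
  · exact le_add_of_nonneg_right (Real.exp_pos _).le
  · exact le_add_of_nonneg_left (Real.exp_pos _).le

lemma sq_le_exp' {w : ℝ} (hw : 0 ≤ w) : w ^ 2 ≤ Real.exp w := by
  have h2 : Real.exp w = Real.exp (w / 2) * Real.exp (w / 2) := by
    rw [← Real.exp_add]; ring_nf
  have h1 : w / 2 + 1 ≤ Real.exp (w / 2) := Real.add_one_le_exp _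
  rcases le_total w 2 with h | h
  · nlinarith [Real.exp_pos (w / 2)]
  · have h3 : Real.exp (w / 2) = Real.exp 1 * Real.exp (w / 2 - 1) := by
      rw [← Real.exp_add]; ring_nf
    have h4 : w / 2 - 1 + 1 ≤ Real.exp (w / 2 - 1) := Real.add_one_le_exp _
    have he : (2 : ℝ) ≤ Real.exp 1 := by
      have := Real.add_one_le_exp 1; linarith
    have h5 : w ≤ Real.exp (w / 2) := by nlinarith [Real.exp_pos (w / 2 - 1)]
    nlinarith [Real.exp_pos (w / 2)]

lemma exp_add_le' {x c : ℝ} (hx : 0 ≤ x) (hc : 0 ≤ c) :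
    Real.exp x + c ≤ Real.exp (x + c) := by
  rw [Real.exp_add]
  nlinarith [Real.one_le_exp hx, Real.add_one_le_exp c, Real.exp_pos x]

lemma exp_le_quad {x : ℝ} (hx : |x| ≤ 1) : Real.exp x ≤ 1 + x + x ^ 2 := by
  have h := abs_le.mp (Real.abs_exp_sub_one_sub_id_le hx)
  linarith [h.2]

section Single

variable {Ω : Type} [MeasurableSpace Ω] (P : Measure Ω) [IsProbabilityMeasure P]
  (Z : Ω → ℝ) (σ α M : ℝ)

/-- integrability and integral bound for `exp (c * |Z|)`. -/
lemma int_exp_abs (hm : Measurable Z)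
    (hint : ∀ l : ℝ, Integrable (fun ω => Real.exp (l * Z ω)) P)
    (hbd : ∀ l : ℝ, (∫ ω, Real.exp (l * Z ω) ∂P) ≤ Real.exp (l ^ 2 * σ ^ 2 / 2))
    (c : ℝ) :
    Integrable (fun ω => Real.exp (c * |Z ω|)) P ∧
      (∫ ω, Real.exp (c * |Z ω|) ∂P) ≤ 2 * Real.exp (c ^ 2 * σ ^ 2 / 2) := by
  have hpt : ∀ ω, Real.exp (c * |Z ω|) ≤ Real.exp (c * Z ω) + Real.exp (-c * Z ω) := by
    intro ω
    have h1 : c * |Z ω| ≤ |c * Z ω| := by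
      rw [abs_mul]
      exact mul_le_mul_of_nonneg_right (le_abs_self c) (abs_nonneg _)
    calc Real.exp (c * |Z ω|) ≤ Real.exp |c * Z ω| := Real.exp_le_exp.mpr h1
      _ ≤ Real.exp (c * Z ω) + Real.exp (-(c * Z ω)) := exp_abs_le_add _
      _ = Real.exp (c * Z ω) + Real.exp (-c * Z ω) := by ring_nf
  have hintsum : Integrable (fun ω => Real.exp (c * Z ω) + Real.exp (-c * Z ω)) P :=
    (hint c).add (hint (-c))
  have hI : Integrable (fun ω => Real.exp (c * |Z ω|)) P := by
    refine hintsum.mono' ((hm.abs.const_mul c).exp.aestronglyMeasurable) ?_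
    filter_upwards with ω
    rw [Real.norm_eq_abs, abs_of_pos (Real.exp_pos _)]
    exact hpt ω
  refine ⟨hI, ?_⟩
  calc (∫ ω, Real.exp (c * |Z ω|) ∂P)
      ≤ ∫ ω, (Real.exp (c * Z ω) + Real.exp (-c * Z ω)) ∂P :=
        integral_mono hI hintsum hpt
    _ = (∫ ω, Real.exp (c * Z ω) ∂P) + ∫ ω, Real.exp (-c * Z ω) ∂P :=
        integral_add (hint c) (hint (-c))
    _ ≤ Real.exp (c ^ 2 * σ ^ 2 / 2) + Real.exp ((-c) ^ 2 * σ ^ 2 / 2) :=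
        add_le_add (hbd c) (hbd (-c))
    _ = 2 * Real.exp (c ^ 2 * σ ^ 2 / 2) := by ring_nf

/-- integrability and bound for the square of the truncation. -/
lemma int_trunc_sq (hσ : 0 < σ) (hm : Measurable Z)
    (hint : ∀ l : ℝ, Integrable (fun ω => Real.exp (l * Z ω)) P)
    (hbd : ∀ l : ℝ, (∫ ω, Real.exp (l * Z ω) ∂P) ≤ Real.exp (l ^ 2 * σ ^ 2 / 2)) :
    Integrable (fun ω => (if |Z ω| ≤ M then Z ω else 0) ^ 2) P ∧
      (∫ ω, (if |Z ω| ≤ M then Z ω else 0) ^ 2 ∂P) ≤ 4 * σ ^ 2 := by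
  obtain ⟨hIe, hBe⟩ := int_exp_abs P Z σ hm hint hbd (1 / σ)
  have hmY : Measurable (fun ω => (if |Z ω| ≤ M then Z ω else 0)) :=
    Measurable.ite (measurableSet_le hm.abs measurable_const) hm measurable_const
  have hpt : ∀ ω, (if |Z ω| ≤ M then Z ω else 0) ^ 2 ≤ σ ^ 2 * Real.exp (1 / σ * |Z ω|) := by
    intro ω
    have h1 : (if |Z ω| ≤ M then Z ω else 0) ^ 2 ≤ (Z ω) ^ 2 := by
      split
      · exact le_rfl
      · simpa using sq_nonneg (Z ω)
    have h2 : (Z ω) ^ 2 ≤ σ ^ 2 * Real.exp (1 / σ * |Z ω|) := by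
      have h3 : (|Z ω| / σ) ^ 2 ≤ Real.exp (|Z ω| / σ) := sq_le_exp' (by positivity)
      have h4 : (|Z ω| / σ) ^ 2 = (Z ω) ^ 2 / σ ^ 2 := by
        rw [div_pow, sq_abs]
      rw [h4] at h3
      have : |Z ω| / σ = 1 / σ * |Z ω| := by ring
      rw [this] at h3
      calc (Z ω) ^ 2 = σ ^ 2 * ((Z ω) ^ 2 / σ ^ 2) := by field_simp
        _ ≤ σ ^ 2 * Real.exp (1 / σ * |Z ω|) := by
            exact mul_le_mul_of_nonneg_left h3 (by positivity)
    exact h1.trans h2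
  have hI : Integrable (fun ω => (if |Z ω| ≤ M then Z ω else 0) ^ 2) P := by
    refine (hIe.const_mul (σ ^ 2)).mono' (hmY.pow_const 2).aestronglyMeasurable ?_
    filter_upwards with ω
    rw [Real.norm_eq_abs, abs_of_nonneg (by positivity)]
    exact hpt ω
  refine ⟨hI, ?_⟩
  have he4 : Real.exp ((1 / σ) ^ 2 * σ ^ 2 / 2) ≤ 2 := by
    have : (1 / σ) ^ 2 * σ ^ 2 / 2 = 1 / 2 := by field_simp
    rw [this]
    have h5 : Real.exp (1 / 2) * Real.exp (1 / 2) = Real.exp 1 := by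
      rw [← Real.exp_add]; norm_num
    have h6 : Real.exp 1 < 2.7182818286 := Real.exp_one_lt_d9
    nlinarith [Real.exp_pos (1 / 2 : ℝ)]
  calc (∫ ω, (if |Z ω| ≤ M then Z ω else 0) ^ 2 ∂P)
      ≤ ∫ ω, σ ^ 2 * Real.exp (1 / σ * |Z ω|) ∂P :=
        integral_mono hI (hIe.const_mul _) hpt
    _ = σ ^ 2 * ∫ ω, Real.exp (1 / σ * |Z ω|) ∂P := integral_const_mul _ _
    _ ≤ σ ^ 2 * (2 * Real.exp ((1 / σ) ^ 2 * σ ^ 2 / 2)) := by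
        exact mul_le_mul_of_nonneg_left hBe (by positivity)
    _ ≤ 4 * σ ^ 2 := by nlinarith [sq_nonneg σ]

end Single
section Single2

variable {Ω : Type} [MeasurableSpace Ω] (P : Measure Ω) [IsProbabilityMeasure P]
  (Z : Ω → ℝ) (σ α M : ℝ)

lemma meas_trunc (hm : Measurable Z) :
    Measurable (fun ω => (if |Z ω| ≤ M then Z ω else 0)) :=
  Measurable.ite (measurableSet_le hm.abs measurable_const) hm measurable_const

lemma int_trunc (hm : Measurable Z) (hZint : Integrable Z P) :
    Integrable (fun ω => (if |Z ω| ≤ M then Z ω else 0)) P := by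
  refine hZint.abs.mono' (meas_trunc Z M hm).aestronglyMeasurable ?_
  filter_upwards with ω
  rw [Real.norm_eq_abs]
  split
  · exact le_rfl
  · simp

lemma exp_rate (hσ : 0 < σ) (hα : 0 < α)
    (hM2 : M ^ 2 = 2 * σ ^ 2 * Real.log (2 / α)) :
    Real.exp (-(M / σ ^ 2) * M + (M / σ ^ 2) ^ 2 * σ ^ 2 / 2) = α / 2 := by
  have h1 : -(M / σ ^ 2) * M + (M / σ ^ 2) ^ 2 * σ ^ 2 / 2 = -(M ^ 2 / (2 * σ ^ 2)) := by
    field_simp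
    ring
  have h2 : M ^ 2 / (2 * σ ^ 2) = Real.log (2 / α) := by
    rw [hM2]
    field_simp
  rw [h1, h2, Real.exp_neg, Real.exp_log (by positivity), inv_div]

lemma trunc_bias (hσ : 0 < σ) (hα : 0 < α)
    (hM2 : M ^ 2 = 2 * σ ^ 2 * Real.log (2 / α)) (hMσ : σ ≤ M)
    (hm : Measurable Z) (hZint : Integrable Z P) (hZ0 : (∫ ω, Z ω ∂P) = 0)
    (hint : ∀ l : ℝ, Integrable (fun ω => Real.exp (l * Z ω)) P)
    (hbd : ∀ l : ℝ, (∫ ω, Real.exp (l * Z ω) ∂P) ≤ Real.exp (l ^ 2 * σ ^ 2 / 2)) :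
    |∫ ω, (if |Z ω| ≤ M then Z ω else 0) ∂P| ≤ M * α := by
  set γ := M / σ ^ 2 with hγ
  have hM0 : 0 < M := lt_of_lt_of_le hσ hMσ
  have hγ0 : 0 < γ := by positivity
  have hintY := int_trunc P Z M hm hZint
  have hpt : ∀ ω, |(if |Z ω| ≤ M then Z ω else 0) - Z ω| ≤
      M * Real.exp (-γ * M) * (Real.exp (γ * Z ω) + Real.exp (-γ * Z ω)) := by
    intro ω
    by_cases h : |Z ω| ≤ M
    · rw [if_pos h, sub_self, abs_zero]
      positivity
    · rw [if_neg h, zero_sub, abs_neg]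
      push_neg at h
      have key : |Z ω| ≤ M * Real.exp (γ * (|Z ω| - M)) := by
        have e1 : (|Z ω| - M) / M + 1 ≤ Real.exp ((|Z ω| - M) / M) := Real.add_one_le_exp _
        have e2 : (|Z ω| - M) / M ≤ γ * (|Z ω| - M) := by
          rw [div_eq_mul_inv, mul_comm]
          refine mul_le_mul_of_nonneg_right ?_ (by linarith)
          rw [hγ]
          rw [inv_le_iff_one_le_mul₀ hM0, div_mul_eq_mul_div, le_div_iff₀ (by positivity)]
          nlinarith
        have e3 : Real.exp ((|Z ω| - M) / M) ≤ Real.exp (γ * (|Z ω| - M)) :=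
          Real.exp_le_exp.mpr e2
        have e7 := mul_le_mul_of_nonneg_left (e1.trans e3) hM0.le
        calc |Z ω| = M * ((|Z ω| - M) / M + 1) := by field_simp; ring
          _ ≤ M * Real.exp (γ * (|Z ω| - M)) := e7
      have key2 : Real.exp (γ * (|Z ω| - M)) ≤
          Real.exp (-γ * M) * (Real.exp (γ * Z ω) + Real.exp (-γ * Z ω)) := by
        have e5 : Real.exp (γ * (|Z ω| - M)) = Real.exp (-γ * M) * Real.exp (γ * |Z ω|) := by
          rw [← Real.exp_add]; ring_nf
        rw [e5]
        refine mul_le_mul_of_nonneg_left ?_ (Real.exp_pos _).le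
        have e6 : γ * |Z ω| = |γ * Z ω| := by rw [abs_mul, abs_of_pos hγ0]
        calc Real.exp (γ * |Z ω|) = Real.exp |γ * Z ω| := by rw [e6]
          _ ≤ Real.exp (γ * Z ω) + Real.exp (-(γ * Z ω)) := exp_abs_le_add _
          _ = Real.exp (γ * Z ω) + Real.exp (-γ * Z ω) := by ring_nf
      calc |Z ω| ≤ M * Real.exp (γ * (|Z ω| - M)) := key
        _ ≤ M * (Real.exp (-γ * M) * (Real.exp (γ * Z ω) + Real.exp (-γ * Z ω))) :=
            mul_le_mul_of_nonneg_left key2 hM0.le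
        _ = M * Real.exp (-γ * M) * (Real.exp (γ * Z ω) + Real.exp (-γ * Z ω)) := by ring
  have hIrhs : Integrable
      (fun ω => M * Real.exp (-γ * M) * (Real.exp (γ * Z ω) + Real.exp (-γ * Z ω))) P :=
    ((hint γ).add (hint (-γ))).const_mul _
  have h1 : (∫ ω, (if |Z ω| ≤ M then Z ω else 0) ∂P) =
      ∫ ω, ((if |Z ω| ≤ M then Z ω else 0) - Z ω) ∂P := by
    rw [integral_sub hintY hZint, hZ0, sub_zero]
  rw [h1]
  calc |∫ ω, ((if |Z ω| ≤ M then Z ω else 0) - Z ω) ∂P|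
      ≤ ∫ ω, |(if |Z ω| ≤ M then Z ω else 0) - Z ω| ∂P := by
        simpa [Real.norm_eq_abs] using
          norm_integral_le_integral_norm (fun ω => (if |Z ω| ≤ M then Z ω else 0) - Z ω) (μ := P)
    _ ≤ ∫ ω, M * Real.exp (-γ * M) * (Real.exp (γ * Z ω) + Real.exp (-γ * Z ω)) ∂P :=
        integral_mono (hintY.sub hZint).abs hIrhs hpt
    _ = M * Real.exp (-γ * M) * ((∫ ω, Real.exp (γ * Z ω) ∂P) + ∫ ω, Real.exp (-γ * Z ω) ∂P) := by
        rw [integral_const_mul, integral_add (hint γ) (hint (-γ))]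
    _ ≤ M * Real.exp (-γ * M) * (Real.exp (γ ^ 2 * σ ^ 2 / 2) + Real.exp ((-γ) ^ 2 * σ ^ 2 / 2)) := by
        refine mul_le_mul_of_nonneg_left (add_le_add (hbd γ) (hbd (-γ))) (by positivity)
    _ = 2 * M * Real.exp (-γ * M + γ ^ 2 * σ ^ 2 / 2) := by
        rw [Real.exp_add]; ring_nf
    _ = M * α := by
        rw [exp_rate σ α M hσ hα hM2]; ring

lemma trunc_tail (hσ : 0 < σ) (hα : 0 < α)
    (hM2 : M ^ 2 = 2 * σ ^ 2 * Real.log (2 / α)) (hMσ : σ ≤ M)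
    (hm : Measurable Z)
    (hint : ∀ l : ℝ, Integrable (fun ω => Real.exp (l * Z ω)) P)
    (hbd : ∀ l : ℝ, (∫ ω, Real.exp (l * Z ω) ∂P) ≤ Real.exp (l ^ 2 * σ ^ 2 / 2)) :
    (P {ω | M ≤ |Z ω|}).toReal ≤ α := by
  set γ := M / σ ^ 2 with hγ
  have hM0 : 0 < M := lt_of_lt_of_le hσ hMσ
  have hγ0 : (0 : ℝ) ≤ γ := by positivity
  have hrate := exp_rate σ α M hσ hα hM2
  have h1 : (P {ω | M ≤ Z ω}).toReal ≤ α / 2 := by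
    have hm1 := measure_ge_le_exp_mul_mgf (X := Z) (μ := P) M hγ0 (hint γ)
    have h2 : mgf Z P γ ≤ Real.exp (γ ^ 2 * σ ^ 2 / 2) := hbd γ
    calc (P {ω | M ≤ Z ω}).toReal ≤ Real.exp (-γ * M) * mgf Z P γ := hm1
      _ ≤ Real.exp (-γ * M) * Real.exp (γ ^ 2 * σ ^ 2 / 2) :=
          mul_le_mul_of_nonneg_left h2 (Real.exp_pos _).le
      _ = α / 2 := by rw [← Real.exp_add]; exact hrate
  have h2 : (P {ω | M ≤ -Z ω}).toReal ≤ α / 2 := by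
    have hintn : Integrable (fun ω => Real.exp (γ * (-Z ω))) P := by
      have e : (fun ω => Real.exp (γ * (-Z ω))) = fun ω => Real.exp ((-γ) * Z ω) := by
        funext ω; ring_nf
      rw [e]; exact hint (-γ)
    have hm1 := measure_ge_le_exp_mul_mgf (X := fun ω => -Z ω) (μ := P) M hγ0 hintn
    have h3 : mgf (fun ω => -Z ω) P γ ≤ Real.exp (γ ^ 2 * σ ^ 2 / 2) := by
      have e : mgf (fun ω => -Z ω) P γ = ∫ ω, Real.exp ((-γ) * Z ω) ∂P := by
        simp only [mgf]
        congr 1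
        funext ω
        ring_nf
      rw [e]
      calc (∫ ω, Real.exp ((-γ) * Z ω) ∂P) ≤ Real.exp ((-γ) ^ 2 * σ ^ 2 / 2) := hbd (-γ)
        _ = Real.exp (γ ^ 2 * σ ^ 2 / 2) := by ring_nf
    calc (P {ω | M ≤ -Z ω}).toReal ≤ Real.exp (-γ * M) * mgf (fun ω => -Z ω) P γ := hm1
      _ ≤ Real.exp (-γ * M) * Real.exp (γ ^ 2 * σ ^ 2 / 2) :=
          mul_le_mul_of_nonneg_left h3 (Real.exp_pos _).le
      _ = α / 2 := by rw [← Real.exp_add]; exact hrate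
  have hsub : {ω | M ≤ |Z ω|} ⊆ {ω | M ≤ Z ω} ∪ {ω | M ≤ -Z ω} := by
    intro ω hω
    simp only [Set.mem_setOf_eq] at hω
    rcases abs_choice (Z ω) with h | h
    · left; simp only [Set.mem_setOf_eq]; rw [h] at hω; exact hω
    · right; simp only [Set.mem_setOf_eq]; rw [h] at hω; exact hω
  have hle : P {ω | M ≤ |Z ω|} ≤ P {ω | M ≤ Z ω} + P {ω | M ≤ -Z ω} :=
    (measure_mono hsub).trans (measure_union_le _ _)
  have hfin1 : P {ω | M ≤ Z ω} ≠ ⊤ := measure_ne_top _ _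
  have hfin2 : P {ω | M ≤ -Z ω} ≠ ⊤ := measure_ne_top _ _
  have := ENNReal.toReal_mono (by simp [ENNReal.add_ne_top, hfin1, hfin2]) hle
  rw [ENNReal.toReal_add hfin1 hfin2] at this
  linarith

end Single2
section Single3

variable {Ω : Type} [MeasurableSpace Ω] (P : Measure Ω) [IsProbabilityMeasure P]
  (Z : Ω → ℝ) (σ α M : ℝ)

lemma trunc_mgf (hσ : 0 < σ) (hα : 0 < α) (hα2 : α ≤ 1 / 2)
    (hM2 : M ^ 2 = 2 * σ ^ 2 * Real.log (2 / α)) (hMσ : σ ≤ M)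
    (hm : Measurable Z) (hZint : Integrable Z P) (hZ0 : (∫ ω, Z ω ∂P) = 0)
    (hint : ∀ l : ℝ, Integrable (fun ω => Real.exp (l * Z ω)) P)
    (hbd : ∀ l : ℝ, (∫ ω, Real.exp (l * Z ω) ∂P) ≤ Real.exp (l ^ 2 * σ ^ 2 / 2))
    (b : ℝ) (hb : b = ∫ ω, (if |Z ω| ≤ M then Z ω else 0) ∂P) (l : ℝ) :
    (∫ ω, Real.exp (l * ((if |Z ω| ≤ M then Z ω else 0) - b)) ∂P) ≤
      Real.exp (25 * l ^ 2 * σ ^ 2) := by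
  have hM0 : 0 < M := lt_of_lt_of_le hσ hMσ
  have hbabs : |b| ≤ M * α := hb ▸ trunc_bias P Z σ α M hσ hα hM2 hMσ hm hZint hZ0 hint hbd
  have hbM : |b| ≤ M := hbabs.trans (by nlinarith)
  have hmY := meas_trunc Z M hm
  have hIY := int_trunc P Z M hm hZint
  have hYabs : ∀ ω, |(if |Z ω| ≤ M then Z ω else 0)| ≤ M := by
    intro ω
    split
    · next h => exact h
    · simpa using hM0.le
  have hYb : ∀ ω, |(if |Z ω| ≤ M then Z ω else 0) - b| ≤ 2 * M := by
    intro ω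
    calc |(if |Z ω| ≤ M then Z ω else 0) - b| ≤
        |(if |Z ω| ≤ M then Z ω else 0)| + |b| := abs_sub _ _
      _ ≤ M + M := add_le_add (hYabs ω) hbM
      _ = 2 * M := by ring
  have hIexp : ∀ c : ℝ,
      Integrable (fun ω => Real.exp (c * ((if |Z ω| ≤ M then Z ω else 0) - b))) P := by
    intro c
    refine (integrable_const (Real.exp (|c| * (2 * M)))).mono'
      (((hmY.sub_const b).const_mul c).exp.aestronglyMeasurable) ?_
    filter_upwards with ω
    rw [Real.norm_eq_abs, abs_of_pos (Real.exp_pos _)]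
    refine Real.exp_le_exp.mpr ?_
    calc c * ((if |Z ω| ≤ M then Z ω else 0) - b) ≤
        |c * ((if |Z ω| ≤ M then Z ω else 0) - b)| := le_abs_self _
      _ = |c| * |(if |Z ω| ≤ M then Z ω else 0) - b| := abs_mul _ _
      _ ≤ |c| * (2 * M) := mul_le_mul_of_nonneg_left (hYb ω) (abs_nonneg _)
  rcases le_or_gt (|l| * (2 * M)) 1 with hc | hc
  · -- small λ regime
    have hx : ∀ ω, |l * ((if |Z ω| ≤ M then Z ω else 0) - b)| ≤ 1 := by
      intro ω
      rw [abs_mul]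
      exact (mul_le_mul_of_nonneg_left (hYb ω) (abs_nonneg _)).trans hc
    have hpt : ∀ ω, Real.exp (l * ((if |Z ω| ≤ M then Z ω else 0) - b)) ≤
        1 + l * ((if |Z ω| ≤ M then Z ω else 0) - b) +
          l ^ 2 * ((if |Z ω| ≤ M then Z ω else 0) - b) ^ 2 := by
      intro ω
      have h := exp_le_quad (hx ω)
      calc Real.exp (l * ((if |Z ω| ≤ M then Z ω else 0) - b)) ≤
          1 + l * ((if |Z ω| ≤ M then Z ω else 0) - b) +
            (l * ((if |Z ω| ≤ M then Z ω else 0) - b)) ^ 2 := h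
        _ = 1 + l * ((if |Z ω| ≤ M then Z ω else 0) - b) +
            l ^ 2 * ((if |Z ω| ≤ M then Z ω else 0) - b) ^ 2 := by ring
    obtain ⟨hIY2, hBY2⟩ := int_trunc_sq P Z σ M hσ hm hint hbd
    have hexpand : (fun ω => ((if |Z ω| ≤ M then Z ω else 0) - b) ^ 2) =
        fun ω => ((if |Z ω| ≤ M then Z ω else 0) ^ 2 -
          (2 * b) * (if |Z ω| ≤ M then Z ω else 0)) + b ^ 2 := by
      funext ω; ring
    have i1 : Integrable (fun ω => (if |Z ω| ≤ M then Z ω else 0) ^ 2 -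
        2 * b * (if |Z ω| ≤ M then Z ω else 0)) P := hIY2.sub (hIY.const_mul (2 * b))
    have hIYb2 : Integrable (fun ω => ((if |Z ω| ≤ M then Z ω else 0) - b) ^ 2) P := by
      rw [hexpand]
      exact i1.add (integrable_const _)
    have hEYb2 : (∫ ω, ((if |Z ω| ≤ M then Z ω else 0) - b) ^ 2 ∂P) ≤ 4 * σ ^ 2 := by
      rw [hexpand]
      rw [integral_add i1 (integrable_const _),
        integral_sub hIY2 (hIY.const_mul (2 * b)), integral_const_mul, ← hb, integral_const]
      simp only [measure_univ, probReal_univ, ENNReal.toReal_one, smul_eq_mul, one_mul]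
      nlinarith [sq_nonneg b]
    have j0 : Integrable (fun ω => (if |Z ω| ≤ M then Z ω else 0) - b) P :=
      hIY.sub (integrable_const b)
    have j1 : Integrable (fun ω => 1 + l * ((if |Z ω| ≤ M then Z ω else 0) - b)) P :=
      (integrable_const 1).add (j0.const_mul l)
    have hIquad : Integrable (fun ω => 1 + l * ((if |Z ω| ≤ M then Z ω else 0) - b) +
        l ^ 2 * ((if |Z ω| ≤ M then Z ω else 0) - b) ^ 2) P :=
      j1.add (hIYb2.const_mul (l ^ 2))
    have hEmid : (∫ ω, (1 + l * ((if |Z ω| ≤ M then Z ω else 0) - b) +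
        l ^ 2 * ((if |Z ω| ≤ M then Z ω else 0) - b) ^ 2) ∂P) ≤ 1 + 4 * l ^ 2 * σ ^ 2 := by
      rw [integral_add j1 (hIYb2.const_mul (l ^ 2)),
        integral_add (integrable_const 1) (j0.const_mul l),
        integral_const_mul, integral_const_mul,
        integral_sub hIY (integrable_const b), ← hb, integral_const, integral_const]
      simp only [measure_univ, probReal_univ, ENNReal.toReal_one, smul_eq_mul, one_mul]
      have h13 : l ^ 2 * (∫ ω, ((if |Z ω| ≤ M then Z ω else 0) - b) ^ 2 ∂P) ≤
          l ^ 2 * (4 * σ ^ 2) := mul_le_mul_of_nonneg_left hEYb2 (sq_nonneg l)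
      linarith
    calc (∫ ω, Real.exp (l * ((if |Z ω| ≤ M then Z ω else 0) - b)) ∂P)
        ≤ ∫ ω, (1 + l * ((if |Z ω| ≤ M then Z ω else 0) - b) +
            l ^ 2 * ((if |Z ω| ≤ M then Z ω else 0) - b) ^ 2) ∂P :=
          integral_mono (hIexp l) hIquad hpt
      _ ≤ 1 + 4 * l ^ 2 * σ ^ 2 := hEmid
      _ ≤ Real.exp (4 * l ^ 2 * σ ^ 2) := by
          have := Real.add_one_le_exp (4 * l ^ 2 * σ ^ 2)
          linarith
      _ ≤ Real.exp (25 * l ^ 2 * σ ^ 2) := by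
          refine Real.exp_le_exp.mpr ?_
          nlinarith [sq_nonneg l, sq_nonneg σ, sq_nonneg (l * σ)]
  · -- large λ regime
    have htail := trunc_tail P Z σ α M hσ hα hM2 hMσ hm hint hbd
    have hmset : MeasurableSet {ω | M ≤ |Z ω|} := measurableSet_le measurable_const hm.abs
    have hpt : ∀ ω, Real.exp (l * (if |Z ω| ≤ M then Z ω else 0)) ≤
        Real.exp (l * Z ω) + Set.indicator {ω' | M ≤ |Z ω'|} (fun _ => (1 : ℝ)) ω := by
      intro ω
      by_cases h : |Z ω| ≤ M
      · rw [if_pos h]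
        exact le_add_of_nonneg_right (Set.indicator_nonneg (by intro _ _; norm_num) ω)
      · rw [if_neg h, mul_zero, Real.exp_zero]
        push_neg at h
        rw [Set.indicator_of_mem (by exact h.le)]
        exact le_add_of_nonneg_left (Real.exp_pos _).le
    have hIind : Integrable (Set.indicator {ω' | M ≤ |Z ω'|} (fun _ => (1 : ℝ))) P :=
      (integrable_const 1).indicator hmset
    have hIexpY : Integrable (fun ω => Real.exp (l * (if |Z ω| ≤ M then Z ω else 0))) P := by
      refine (integrable_const (Real.exp (|l| * M))).mono'
        ((hmY.const_mul l).exp.aestronglyMeasurable) ?_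
      filter_upwards with ω
      rw [Real.norm_eq_abs, abs_of_pos (Real.exp_pos _)]
      refine Real.exp_le_exp.mpr ?_
      calc l * (if |Z ω| ≤ M then Z ω else 0) ≤ |l * (if |Z ω| ≤ M then Z ω else 0)| :=
          le_abs_self _
        _ = |l| * |(if |Z ω| ≤ M then Z ω else 0)| := abs_mul _ _
        _ ≤ |l| * M := mul_le_mul_of_nonneg_left (hYabs ω) (abs_nonneg _)
    have h1 : (∫ ω, Real.exp (l * (if |Z ω| ≤ M then Z ω else 0)) ∂P) ≤
        Real.exp (l ^ 2 * σ ^ 2 / 2) + α := by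
      calc (∫ ω, Real.exp (l * (if |Z ω| ≤ M then Z ω else 0)) ∂P)
          ≤ ∫ ω, (Real.exp (l * Z ω) +
              Set.indicator {ω' | M ≤ |Z ω'|} (fun _ => (1 : ℝ)) ω) ∂P :=
            integral_mono hIexpY ((hint l).add hIind) hpt
        _ = (∫ ω, Real.exp (l * Z ω) ∂P) +
            ∫ ω, Set.indicator {ω' | M ≤ |Z ω'|} (fun _ => (1 : ℝ)) ω ∂P :=
            integral_add (hint l) hIind
        _ ≤ Real.exp (l ^ 2 * σ ^ 2 / 2) + α := by
            refine add_le_add (hbd l) ?_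
            rw [integral_indicator_const _ hmset]
            simpa [measureReal_def] using htail
    have h2 : (∫ ω, Real.exp (l * ((if |Z ω| ≤ M then Z ω else 0) - b)) ∂P) =
        Real.exp (-(l * b)) * ∫ ω, Real.exp (l * (if |Z ω| ≤ M then Z ω else 0)) ∂P := by
      rw [← integral_const_mul]
      congr 1
      funext ω
      rw [← Real.exp_add]
      congr 1
      ring
    rw [h2]
    have h3 : Real.exp (-(l * b)) * (∫ ω, Real.exp (l * (if |Z ω| ≤ M then Z ω else 0)) ∂P) ≤
        Real.exp (-(l * b)) * Real.exp (l ^ 2 * σ ^ 2 / 2 + α) := by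
      refine mul_le_mul_of_nonneg_left ?_ (Real.exp_pos _).le
      refine le_trans ?_ (exp_add_le' (by positivity) hα.le)
      calc (∫ ω, Real.exp (l * (if |Z ω| ≤ M then Z ω else 0)) ∂P)
          ≤ Real.exp (l ^ 2 * σ ^ 2 / 2) + α := h1
        _ ≤ Real.exp (l ^ 2 * σ ^ 2 / 2) + α := le_rfl
    refine h3.trans ?_
    rw [← Real.exp_add]
    refine Real.exp_le_exp.mpr ?_
    -- arithmetic: -(l*b) + (l^2σ^2/2 + α) ≤ 25 l^2 σ^2
    have hαlg : α * Real.log (2 / α) ≤ 2 := by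
      have h4 : Real.log (2 / α) ≤ 2 / α - 1 := Real.log_le_sub_one_of_pos (by positivity)
      have h5 := mul_le_mul_of_nonneg_left h4 hα.le
      have : α * (2 / α - 1) = 2 - α := by field_simp
      linarith [this ▸ h5]
    have hc' : 1 ≤ |l| * (2 * M) := hc.le
    have hl2 : |l| ≤ 2 * l ^ 2 * M := by
      have h6 := mul_le_mul_of_nonneg_left hc' (abs_nonneg l)
      have h7 : |l| * (|l| * (2 * M)) = 2 * l ^ 2 * M := by
        rw [show |l| * (|l| * (2 * M)) = |l| ^ 2 * (2 * M) by ring, sq_abs]; ring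
      linarith [h7 ▸ h6]
    have hbound1 : -(l * b) ≤ 2 * l ^ 2 * M * (M * α) := by
      calc -(l * b) ≤ |l * b| := neg_le_abs _
        _ = |l| * |b| := abs_mul _ _
        _ ≤ (2 * l ^ 2 * M) * (M * α) := by
            refine mul_le_mul hl2 hbabs (abs_nonneg b) ?_
            positivity
    have hbound2 : 1 ≤ 4 * l ^ 2 * M ^ 2 := by nlinarith [sq_abs l, abs_nonneg l]
    have hM2α : M ^ 2 * α = 2 * σ ^ 2 * (α * Real.log (2 / α)) := by rw [hM2]; ring
    have hbound1' : -(l * b) ≤ 8 * l ^ 2 * σ ^ 2 := by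
      have e1 : 2 * l ^ 2 * M * (M * α) = 4 * l ^ 2 * σ ^ 2 * (α * Real.log (2 / α)) := by
        rw [show 2 * l ^ 2 * M * (M * α) = 2 * l ^ 2 * (M ^ 2 * α) by ring, hM2α]; ring
      have e2 : 4 * l ^ 2 * σ ^ 2 * (α * Real.log (2 / α)) ≤ 4 * l ^ 2 * σ ^ 2 * 2 :=
        mul_le_mul_of_nonneg_left hαlg (by positivity)
      calc -(l * b) ≤ 2 * l ^ 2 * M * (M * α) := hbound1
        _ = 4 * l ^ 2 * σ ^ 2 * (α * Real.log (2 / α)) := e1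
        _ ≤ 4 * l ^ 2 * σ ^ 2 * 2 := e2
        _ = 8 * l ^ 2 * σ ^ 2 := by ring
    have hbound2' : α ≤ 16 * l ^ 2 * σ ^ 2 := by
      have e3 : α * (4 * l ^ 2 * M ^ 2) = 8 * l ^ 2 * σ ^ 2 * (α * Real.log (2 / α)) := by
        rw [show α * (4 * l ^ 2 * M ^ 2) = 4 * l ^ 2 * (M ^ 2 * α) by ring, hM2α]; ring
      have e4 : 8 * l ^ 2 * σ ^ 2 * (α * Real.log (2 / α)) ≤ 8 * l ^ 2 * σ ^ 2 * 2 :=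
        mul_le_mul_of_nonneg_left hαlg (by positivity)
      calc α = α * 1 := (mul_one α).symm
        _ ≤ α * (4 * l ^ 2 * M ^ 2) := mul_le_mul_of_nonneg_left hbound2 hα.le
        _ = 8 * l ^ 2 * σ ^ 2 * (α * Real.log (2 / α)) := e3
        _ ≤ 8 * l ^ 2 * σ ^ 2 * 2 := e4
        _ = 16 * l ^ 2 * σ ^ 2 := by ring
    have hpos : (0 : ℝ) ≤ l ^ 2 * σ ^ 2 := by positivity
    linarith

end Single3

end AuxiliaryLemmas

set_option maxHeartbeats 1000000 in
/-- **Concentration of the truncated sum.** There is a universal constant `C > 0` such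
that for i.i.d. `σ`-sub-Gaussian samples `X_1, …, X_t` with mean `μ` and the truncation
interval `E = [μ − σ√(2 log (2/α)), μ + σ√(2 log (2/α))]`, with probability at least
`1 − δ`, `|∑_{s=1}^t (X_s − μ) 1{X_s ∈ E}| ≤ C t (σ α √(log (1/α)) + σ √((2/t) log (2/δ)))`. -/
theorem truncated_sum_concentration :
    ∃ C : ℝ, 0 < C ∧
      ∀ (Ω : Type) (_ : MeasurableSpace Ω) (P : Measure Ω), IsProbabilityMeasure P →
      ∀ (σ α δ μ : ℝ) (t : ℕ),
        0 < σ → 0 < α → α ≤ 1 / 2 → 0 < δ → δ < 1 → 0 < t →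
      ∀ X : Fin t → Ω → ℝ,
        (∀ s : Fin t, IsSubGaussianRV P (X s) μ σ) →
        iIndepFun X P →
        (∀ s s' : Fin t, IdentDistrib (X s) (X s') P P) →
        ENNReal.ofReal (1 - δ) ≤
          P {ω | |∑ s : Fin t,
                    (if X s ω ∈ Set.Icc (μ - σ * Real.sqrt (2 * Real.log (2 / α)))
                                        (μ + σ * Real.sqrt (2 * Real.log (2 / α)))
                     then X s ω - μ else 0)|
                ≤ C * (t : ℝ) * (σ * α * Real.sqrt (Real.log (1 / α))
                    + σ * Real.sqrt ((2 / (t : ℝ)) * Real.log (2 / δ)))} := by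
  refine ⟨8, by norm_num, ?_⟩
  intro Ω mΩ P hP σ α δ μ t hσ hα hα2 hδ hδ1 ht X hSG hIndep _hID
  set lg := Real.log (2 / α) with hlg
  set Lp := Real.log (1 / α) with hLp
  set lgδ := Real.log (2 / δ) with hlgδ
  set M := σ * Real.sqrt (2 * lg) with hM
  -- basic facts
  have htpos : (0 : ℝ) < t := by exact_mod_cast ht
  have h2α : (4 : ℝ) ≤ 2 / α := by rw [le_div_iff₀ hα]; linarith
  have hlg1 : 1 ≤ lg := by
    rw [hlg]
    refine (Real.le_log_iff_exp_le (by positivity)).mpr ?_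
    have := Real.exp_one_lt_d9
    linarith
  have hM2 : M ^ 2 = 2 * σ ^ 2 * lg := by
    rw [hM, mul_pow, Real.sq_sqrt (by positivity)]; ring
  have hMσ : σ ≤ M := by
    have hMnn : 0 ≤ M := by rw [hM]; positivity
    nlinarith [hM2, hσ, hlg1, sq_nonneg σ]
  have hM0 : 0 < M := lt_of_lt_of_le hσ hMσ
  -- per-coordinate facts
  have hZm : ∀ s, Measurable (fun ω => X s ω - μ) := fun s => (hSG s).1.sub_const μ
  have hZint : ∀ s, Integrable (fun ω => X s ω - μ) P := fun s =>
    (hSG s).2.1.sub (integrable_const μ)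
  have hZ0 : ∀ s, (∫ ω, (X s ω - μ) ∂P) = 0 := by
    intro s
    rw [integral_sub (hSG s).2.1 (integrable_const μ), (hSG s).2.2.1, integral_const]
    simp
  have hintl : ∀ s (l : ℝ), Integrable (fun ω => Real.exp (l * (X s ω - μ))) P :=
    fun s l => ((hSG s).2.2.2 l).1
  have hbdl : ∀ s (l : ℝ), (∫ ω, Real.exp (l * (X s ω - μ)) ∂P) ≤
      Real.exp (l ^ 2 * σ ^ 2 / 2) := fun s l => ((hSG s).2.2.2 l).2
  set b : Fin t → ℝ := fun s => ∫ ω, (if |X s ω - μ| ≤ M then X s ω - μ else 0) ∂P with hbdef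
  have hbabs : ∀ s, |b s| ≤ M * α := fun s =>
    trunc_bias P (fun ω => X s ω - μ) σ α M hσ hα hM2 hMσ (hZm s) (hZint s) (hZ0 s)
      (hintl s) (hbdl s)
  set g : Fin t → ℝ → ℝ := fun s x => (if |x - μ| ≤ M then x - μ else 0) - b s with hg
  have hgm : ∀ s, Measurable (g s) := by
    intro s
    exact ((Measurable.ite (measurableSet_le (measurable_id.sub_const μ).abs measurable_const)
      (measurable_id.sub_const μ) measurable_const).sub_const (b s))
  set W : Fin t → Ω → ℝ := fun s => (g s) ∘ (X s) with hW
  have hWm : ∀ s, Measurable (W s) := fun s => (hgm s).comp (hSG s).1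
  have hindepW : iIndepFun W P := hIndep.comp g hgm
  have hWval : ∀ s ω, W s ω = (if |X s ω - μ| ≤ M then X s ω - μ else 0) - b s := by
    intro s ω; rfl
  have hWabs : ∀ s ω, |W s ω| ≤ 2 * M := by
    intro s ω
    rw [hWval]
    have h1 : |(if |X s ω - μ| ≤ M then X s ω - μ else 0)| ≤ M := by
      split
      · next h => exact h
      · simpa using hM0.le
    have h2 : |b s| ≤ M := by nlinarith [hbabs s]
    calc |(if |X s ω - μ| ≤ M then X s ω - μ else 0) - b s| ≤
        |(if |X s ω - μ| ≤ M then X s ω - μ else 0)| + |b s| := abs_sub _ _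
      _ ≤ M + M := add_le_add h1 h2
      _ = 2 * M := by ring
  have hmgfW : ∀ s (l : ℝ), mgf (W s) P l ≤ Real.exp (25 * l ^ 2 * σ ^ 2) := by
    intro s l
    exact trunc_mgf P (fun ω => X s ω - μ) σ α M hσ hα hα2 hM2 hMσ (hZm s) (hZint s)
      (hZ0 s) (hintl s) (hbdl s) (b s) rfl l
  -- the sum
  set S : Ω → ℝ := ∑ s : Fin t, W s with hS
  have hSapp : ∀ ω, S ω = ∑ s : Fin t, W s ω := by
    intro ω; rw [hS]; exact Finset.sum_apply ω Finset.univ W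
  have hSm : Measurable S := by
    have e : S = fun ω => ∑ s : Fin t, W s ω := funext hSapp
    rw [e]
    exact Finset.measurable_sum Finset.univ (fun s _ => hWm s)
  have hSabs : ∀ ω, |S ω| ≤ 2 * M * t := by
    intro ω
    rw [hSapp]
    calc |∑ s : Fin t, W s ω| ≤ ∑ s : Fin t, |W s ω| := Finset.abs_sum_le_sum_abs _ _
      _ ≤ ∑ _s : Fin t, 2 * M := Finset.sum_le_sum (fun s _ => hWabs s ω)
      _ = 2 * M * t := by
          rw [Finset.sum_const, Finset.card_univ, Fintype.card_fin, nsmul_eq_mul]; ring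
  have hIexpS : ∀ l : ℝ, Integrable (fun ω => Real.exp (l * S ω)) P := by
    intro l
    refine (integrable_const (Real.exp (|l| * (2 * M * t)))).mono'
      ((hSm.const_mul l).exp.aestronglyMeasurable) ?_
    filter_upwards with ω
    rw [Real.norm_eq_abs, abs_of_pos (Real.exp_pos _)]
    refine Real.exp_le_exp.mpr ?_
    calc l * S ω ≤ |l * S ω| := le_abs_self _
      _ = |l| * |S ω| := abs_mul _ _
      _ ≤ |l| * (2 * M * t) := mul_le_mul_of_nonneg_left (hSabs ω) (abs_nonneg _)
  have hmgfS : ∀ l : ℝ, mgf S P l ≤ Real.exp (25 * t * l ^ 2 * σ ^ 2) := by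
    intro l
    rw [hS, hindepW.mgf_sum hWm Finset.univ]
    calc ∏ s : Fin t, mgf (W s) P l ≤ ∏ _s : Fin t, Real.exp (25 * l ^ 2 * σ ^ 2) :=
        Finset.prod_le_prod (fun s _ => mgf_nonneg) (fun s _ => hmgfW s l)
      _ = Real.exp (25 * l ^ 2 * σ ^ 2) ^ (t : ℕ) := by
          rw [Finset.prod_const, Finset.card_univ, Fintype.card_fin]
      _ = Real.exp (25 * t * l ^ 2 * σ ^ 2) := by
          rw [← Real.exp_nat_mul]; ring_nf
  -- Chernoff
  have hlgδpos : 0 < lgδ := Real.log_pos (by rw [lt_div_iff₀ hδ]; linarith)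
  set u := 10 * σ * Real.sqrt (t * lgδ) with hu
  have hupos : 0 < u := by
    rw [hu]
    have : 0 < Real.sqrt (t * lgδ) := Real.sqrt_pos.mpr (by positivity)
    positivity
  have hu2 : u ^ 2 = 100 * σ ^ 2 * (t * lgδ) := by
    rw [hu, mul_pow, mul_pow, Real.sq_sqrt (by positivity)]; ring
  set l0 := u / (50 * t * σ ^ 2) with hl0
  have hl0pos : 0 < l0 := by rw [hl0]; positivity
  have hexponent : -l0 * u + 25 * t * l0 ^ 2 * σ ^ 2 = -lgδ := by
    have e1 : -l0 * u + 25 * t * l0 ^ 2 * σ ^ 2 = -(u ^ 2) / (100 * t * σ ^ 2) := by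
      rw [hl0]; field_simp; ring
    rw [e1, hu2]; field_simp
  have hexpδ : Real.exp (-lgδ) = δ / 2 := by
    rw [Real.exp_neg, hlgδ, Real.exp_log (by positivity), inv_div]
  have hup : (P {ω | u ≤ S ω}).toReal ≤ δ / 2 := by
    have h1 := measure_ge_le_exp_mul_mgf (X := S) (μ := P) u hl0pos.le (hIexpS l0)
    calc (P {ω | u ≤ S ω}).toReal ≤ Real.exp (-l0 * u) * mgf S P l0 := h1
      _ ≤ Real.exp (-l0 * u) * Real.exp (25 * t * l0 ^ 2 * σ ^ 2) :=
          mul_le_mul_of_nonneg_left (hmgfS l0) (Real.exp_pos _).le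
      _ = Real.exp (-l0 * u + 25 * t * l0 ^ 2 * σ ^ 2) := (Real.exp_add _ _).symm
      _ = δ / 2 := by rw [hexponent, hexpδ]
  have hdown : (P {ω | S ω ≤ -u}).toReal ≤ δ / 2 := by
    have h1 := measure_le_le_exp_mul_mgf (X := S) (μ := P) (-u)
      (neg_nonpos.mpr hl0pos.le) (hIexpS (-l0))
    calc (P {ω | S ω ≤ -u}).toReal ≤ Real.exp (-(-l0) * -u) * mgf S P (-l0) := h1
      _ = Real.exp (-l0 * u) * mgf S P (-l0) := by ring_nf
      _ ≤ Real.exp (-l0 * u) * Real.exp (25 * t * (-l0) ^ 2 * σ ^ 2) :=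
          mul_le_mul_of_nonneg_left (hmgfS (-l0)) (Real.exp_pos _).le
      _ = Real.exp (-l0 * u + 25 * t * l0 ^ 2 * σ ^ 2) := by
          rw [← Real.exp_add]; ring_nf
      _ = δ / 2 := by rw [hexponent, hexpδ]
  set A := {ω | u < |S ω|} with hA
  have hAm : MeasurableSet A := measurableSet_lt measurable_const hSm.abs
  have hsub : A ⊆ {ω | u ≤ S ω} ∪ {ω | S ω ≤ -u} := by
    intro ω hω
    simp only [hA, Set.mem_setOf_eq] at hω
    rcases abs_choice (S ω) with h | h
    · left; simp only [Set.mem_setOf_eq]; rw [h] at hω; exact hω.le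
    · right; simp only [Set.mem_setOf_eq]; rw [h] at hω; linarith
  have hPA : P A ≤ ENNReal.ofReal δ := by
    have e1 : P {ω | u ≤ S ω} ≤ ENNReal.ofReal (δ / 2) := by
      rw [← ENNReal.ofReal_toReal (measure_ne_top P {ω | u ≤ S ω})]
      exact ENNReal.ofReal_le_ofReal hup
    have e2 : P {ω | S ω ≤ -u} ≤ ENNReal.ofReal (δ / 2) := by
      rw [← ENNReal.ofReal_toReal (measure_ne_top P {ω | S ω ≤ -u})]
      exact ENNReal.ofReal_le_ofReal hdown
    calc P A ≤ P {ω | u ≤ S ω} + P {ω | S ω ≤ -u} :=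
        (measure_mono hsub).trans (measure_union_le _ _)
      _ ≤ ENNReal.ofReal (δ / 2) + ENNReal.ofReal (δ / 2) := add_le_add e1 e2
      _ = ENNReal.ofReal δ := by
          rw [← ENNReal.ofReal_add (by linarith) (by linarith)]; norm_num
  have hfinal : ENNReal.ofReal (1 - δ) ≤ P Aᶜ := by
    rw [prob_compl_eq_one_sub hAm]
    calc ENNReal.ofReal (1 - δ) = ENNReal.ofReal 1 - ENNReal.ofReal δ :=
        ENNReal.ofReal_sub 1 hδ.le
      _ = 1 - ENNReal.ofReal δ := by rw [ENNReal.ofReal_one]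
      _ ≤ 1 - P A := tsub_le_tsub_left hPA 1
  refine hfinal.trans (measure_mono ?_)
  intro ω hω
  simp only [hA, Set.mem_compl_iff, Set.mem_setOf_eq, not_lt] at hω
  simp only [Set.mem_setOf_eq]
  -- rewrite the truncated sum
  have hiff : ∀ s : Fin t, (X s ω ∈ Set.Icc (μ - M) (μ + M)) ↔ |X s ω - μ| ≤ M := by
    intro s
    rw [Set.mem_Icc, abs_le]
    constructor <;> intro h <;> exact ⟨by linarith [h.1], by linarith [h.2]⟩
  have esum : (∑ s : Fin t, (if X s ω ∈ Set.Icc (μ - M) (μ + M) then X s ω - μ else 0)) =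
      S ω + ∑ s : Fin t, b s := by
    rw [hSapp]
    rw [← Finset.sum_add_distrib]
    refine Finset.sum_congr rfl (fun s _ => ?_)
    rw [if_congr (hiff s) rfl rfl, hWval]
    ring
  rw [esum]
  -- numeric bounds
  have hsumb : |∑ s : Fin t, b s| ≤ t * (M * α) := by
    calc |∑ s : Fin t, b s| ≤ ∑ s : Fin t, |b s| := Finset.abs_sum_le_sum_abs _ _
      _ ≤ ∑ _s : Fin t, M * α := Finset.sum_le_sum (fun s _ => hbabs s)
      _ = t * (M * α) := by
          rw [Finset.sum_const, Finset.card_univ, Fintype.card_fin, nsmul_eq_mul]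
  have habs : |S ω + ∑ s : Fin t, b s| ≤ u + t * (M * α) := by
    calc |S ω + ∑ s : Fin t, b s| ≤ |S ω| + |∑ s : Fin t, b s| := abs_add_le _ _
      _ ≤ u + t * (M * α) := add_le_add hω hsumb
  refine habs.trans ?_
  -- part 1 : t * (M * α) ≤ 2 * t * (σ * α * √Lp)
  have hLplog2 : Real.log 2 ≤ Lp := by
    rw [hLp]
    refine Real.log_le_log (by norm_num) ?_
    rw [le_div_iff₀ hα]; linarith
  have hLppos : 0 < Lp := lt_of_lt_of_le (Real.log_pos (by norm_num)) hLplog2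
  have hlgLp : lg = Real.log 2 + Lp := by
    rw [hlg, hLp, Real.log_div (by norm_num) (ne_of_gt hα), Real.log_div (by norm_num)
      (ne_of_gt hα)]
    ring_nf
    simp [Real.log_one]
  have hMle : M ≤ 2 * σ * Real.sqrt Lp := by
    have h1 : 2 * lg ≤ 4 * Lp := by rw [hlgLp]; nlinarith [hLplog2, hLppos]
    have h2 : Real.sqrt (4 * Lp) = 2 * Real.sqrt Lp := by
      rw [show (4 : ℝ) * Lp = 2 ^ 2 * Lp by ring, Real.sqrt_mul (by positivity),
        Real.sqrt_sq (by norm_num)]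
    calc M = σ * Real.sqrt (2 * lg) := hM
      _ ≤ σ * Real.sqrt (4 * Lp) :=
          mul_le_mul_of_nonneg_left (Real.sqrt_le_sqrt h1) hσ.le
      _ = 2 * σ * Real.sqrt Lp := by rw [h2]; ring
  have hpart1 : t * (M * α) ≤ 2 * t * (σ * α * Real.sqrt Lp) := by
    have := mul_le_mul_of_nonneg_right hMle hα.le
    have h3 : M * α ≤ 2 * (σ * α * Real.sqrt Lp) := by nlinarith [Real.sqrt_nonneg Lp]
    nlinarith [htpos]
  -- part 2 : u ≤ 8 * t * (σ * √(2/t * lgδ))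
  have hpart2 : u ≤ 8 * t * (σ * Real.sqrt (2 / t * lgδ)) := by
    have e5 : (t : ℝ) * Real.sqrt (2 / t * lgδ) = Real.sqrt (2 * (t * lgδ)) := by
      rw [show (2 : ℝ) * (t * lgδ) = t ^ 2 * (2 / t * lgδ) by field_simp,
        Real.sqrt_mul (sq_nonneg _), Real.sqrt_sq htpos.le]
    have e6 : Real.sqrt (2 * (t * lgδ)) = Real.sqrt 2 * Real.sqrt (t * lgδ) :=
      Real.sqrt_mul (by norm_num) _
    have e7 : (10 : ℝ) ≤ 8 * Real.sqrt 2 := by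
      nlinarith [Real.sq_sqrt (show (0 : ℝ) ≤ 2 by norm_num), Real.sqrt_nonneg 2]
    calc u = 10 * σ * Real.sqrt (t * lgδ) := hu
      _ ≤ (8 * Real.sqrt 2) * σ * Real.sqrt (t * lgδ) := by
          have h8 : 0 ≤ σ * Real.sqrt (t * lgδ) := by positivity
          nlinarith [h8]
      _ = 8 * σ * (Real.sqrt 2 * Real.sqrt (t * lgδ)) := by ring
      _ = 8 * σ * ((t : ℝ) * Real.sqrt (2 / t * lgδ)) := by rw [← e6, ← e5]
      _ = 8 * t * (σ * Real.sqrt (2 / t * lgδ)) := by ring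
  have hfin2 : u + t * (M * α) ≤
      8 * t * (σ * α * Real.sqrt Lp + σ * Real.sqrt (2 / t * lgδ)) := by
    have h9 : 2 * t * (σ * α * Real.sqrt Lp) ≤ 8 * t * (σ * α * Real.sqrt Lp) := by
      have : 0 ≤ t * (σ * α * Real.sqrt Lp) := by positivity
      nlinarith [this]
    calc u + t * (M * α) ≤ 8 * t * (σ * Real.sqrt (2 / t * lgδ)) +
        2 * t * (σ * α * Real.sqrt Lp) := add_le_add hpart2 hpart1
      _ ≤ 8 * t * (σ * Real.sqrt (2 / t * lgδ)) + 8 * t * (σ * α * Real.sqrt Lp) := by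
          linarith [h9]
      _ = 8 * t * (σ * α * Real.sqrt Lp + σ * Real.sqrt (2 / t * lgδ)) := by ring
  exact hfin2
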